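/- Let p ≥ 0 be an integer. The function Q : ℝ^{p+1} → ℝ is a positive definite quadratic form: there exists a symmetric positive definite real matrix A = (A_{jk})_{0 ≤ j,k ≤ p} such that Q(d) = Σ_{j,k=0}^{p} A_{jk} d_j d_k for all d ∈ ℝ^{p+1}. -/

import Mathlib

open MeasureTheory Polynomial
open scoped Matrix

/-- `fd p d ξ = (1/2) Σ_{k=0}^p (d_k/k!) ξ^k`. -/
noncomputable def fd (p : ℕ) (d : Fin (p+1) → ℝ) (ξ : ℝ) : ℝ :=
  (1/2) * ∑ k : Fin (p+1), d k / (Nat.factorial k) * ξ ^ (k : ℕ)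

/-- The error functional whose infimum over polynomials of degree ≤ p defines `Qform`. -/
noncomputable def Qerr (p : ℕ) (d : Fin (p+1) → ℝ) (v : Polynomial ℝ) : ℝ :=
  (∫ ξ in (-(1:ℝ)/2)..0, (v.eval ξ + fd p d ξ)^2) +
  (∫ ξ in (0:ℝ)..(1/2), (v.eval ξ - fd p d ξ)^2)

/-- `Q(d) = inf_{v ∈ P} Qerr p d v`. -/
noncomputable def Qform (p : ℕ) (d : Fin (p+1) → ℝ) : ℝ :=
  sInf {q : ℝ | ∃ v : Polynomial ℝ, v.natDegree ≤ p ∧ q = Qerr p d v}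

namespace QAux

variable (p : ℕ)

abbrev V (p : ℕ) := Fin (p+1) → ℝ

/-- evaluation of the polynomial with coefficients `c`. -/
noncomputable def pev (c : V p) (ξ : ℝ) : ℝ := ∑ i : Fin (p+1), c i * ξ ^ (i : ℕ)

noncomputable def Gf (x : V p × V p) (ξ : ℝ) : ℝ := pev p x.1 ξ + fd p x.2 ξ
noncomputable def Hf (x : V p × V p) (ξ : ℝ) : ℝ := pev p x.1 ξ - fd p x.2 ξ

lemma cont_pev (c : V p) : Continuous (pev p c) := by
  unfold pev; exact continuous_finset_sum _ fun i _ => continuous_const.mul (continuous_pow _)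

lemma cont_fd (d : V p) : Continuous (fd p d) := by
  unfold fd
  exact continuous_const.mul (continuous_finset_sum _ fun i _ => continuous_const.mul (continuous_pow _))

lemma cont_G (x : V p × V p) : Continuous (Gf p x) := (cont_pev p x.1).add (cont_fd p x.2)
lemma cont_H (x : V p × V p) : Continuous (Hf p x) := (cont_pev p x.1).sub (cont_fd p x.2)

lemma pev_add (c c' : V p) (ξ : ℝ) : pev p (c + c') ξ = pev p c ξ + pev p c' ξ := by
  simp [pev, add_mul, Finset.sum_add_distrib]

lemma pev_smul (a : ℝ) (c : V p) (ξ : ℝ) : pev p (a • c) ξ = a * pev p c ξ := by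
  simp [pev, Finset.mul_sum, mul_assoc]

lemma fd_add (d d' : V p) (ξ : ℝ) : fd p (d + d') ξ = fd p d ξ + fd p d' ξ := by
  simp [fd, add_div, add_mul, Finset.sum_add_distrib, mul_add]

lemma fd_smul (a : ℝ) (d : V p) (ξ : ℝ) : fd p (a • d) ξ = a * fd p d ξ := by
  simp only [fd, Pi.smul_apply, smul_eq_mul, mul_div_assoc, Finset.mul_sum]
  ring_nf
  congr 1; ext i; ring

lemma Gf_add (x y : V p × V p) (ξ : ℝ) : Gf p (x + y) ξ = Gf p x ξ + Gf p y ξ := by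
  simp [Gf, pev_add, fd_add]; ring

lemma Gf_smul (a : ℝ) (x : V p × V p) (ξ : ℝ) : Gf p (a • x) ξ = a * Gf p x ξ := by
  simp [Gf, pev_smul, fd_smul]; ring

lemma Hf_add (x y : V p × V p) (ξ : ℝ) : Hf p (x + y) ξ = Hf p x ξ + Hf p y ξ := by
  simp [Hf, pev_add, fd_add]; ring

lemma Hf_smul (a : ℝ) (x : V p × V p) (ξ : ℝ) : Hf p (a • x) ξ = a * Hf p x ξ := by
  simp [Hf, pev_smul, fd_smul]; ring

/-- The full symmetric bilinear form. -/
noncomputable def Bfull : (V p × V p) →ₗ[ℝ] (V p × V p) →ₗ[ℝ] ℝ :=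
  LinearMap.mk₂ ℝ
    (fun x y => (∫ ξ in (-(1:ℝ)/2)..0, Gf p x ξ * Gf p y ξ) +
      (∫ ξ in (0:ℝ)..(1/2), Hf p x ξ * Hf p y ξ))
    (by
      intro x y z
      have h1 : (∫ ξ in (-(1:ℝ)/2)..0, Gf p (x + y) ξ * Gf p z ξ)
          = (∫ ξ in (-(1:ℝ)/2)..0, Gf p x ξ * Gf p z ξ) +
            (∫ ξ in (-(1:ℝ)/2)..0, Gf p y ξ * Gf p z ξ) := by
        rw [← intervalIntegral.integral_add (f := fun ξ => Gf p x ξ * Gf p z ξ)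
          (g := fun ξ => Gf p y ξ * Gf p z ξ) (((cont_G p x).mul (cont_G p z)).intervalIntegrable _ _)
          (((cont_G p y).mul (cont_G p z)).intervalIntegrable _ _)]
        congr 1; ext ξ; rw [Gf_add]; ring
      have h2 : (∫ ξ in (0:ℝ)..(1/2), Hf p (x + y) ξ * Hf p z ξ)
          = (∫ ξ in (0:ℝ)..(1/2), Hf p x ξ * Hf p z ξ) +
            (∫ ξ in (0:ℝ)..(1/2), Hf p y ξ * Hf p z ξ) := by
        rw [← intervalIntegral.integral_add (f := fun ξ => Hf p x ξ * Hf p z ξ)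
          (g := fun ξ => Hf p y ξ * Hf p z ξ) (((cont_H p x).mul (cont_H p z)).intervalIntegrable _ _)
          (((cont_H p y).mul (cont_H p z)).intervalIntegrable _ _)]
        congr 1; ext ξ; rw [Hf_add]; ring
      rw [h1, h2]; ring)
    (by
      intro a x y
      have h1 : (∫ ξ in (-(1:ℝ)/2)..0, Gf p (a • x) ξ * Gf p y ξ)
          = a * ∫ ξ in (-(1:ℝ)/2)..0, Gf p x ξ * Gf p y ξ := by
        rw [← intervalIntegral.integral_const_mul]
        congr 1; ext ξ; rw [Gf_smul]; ring
      have h2 : (∫ ξ in (0:ℝ)..(1/2), Hf p (a • x) ξ * Hf p y ξ)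
          = a * ∫ ξ in (0:ℝ)..(1/2), Hf p x ξ * Hf p y ξ := by
        rw [← intervalIntegral.integral_const_mul]
        congr 1; ext ξ; rw [Hf_smul]; ring
      rw [h1, h2]; simp [smul_eq_mul]; ring)
    (by
      intro x y z
      have h1 : (∫ ξ in (-(1:ℝ)/2)..0, Gf p x ξ * Gf p (y + z) ξ)
          = (∫ ξ in (-(1:ℝ)/2)..0, Gf p x ξ * Gf p y ξ) +
            (∫ ξ in (-(1:ℝ)/2)..0, Gf p x ξ * Gf p z ξ) := by
        rw [← intervalIntegral.integral_add (f := fun ξ => Gf p x ξ * Gf p y ξ)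
          (g := fun ξ => Gf p x ξ * Gf p z ξ) (((cont_G p x).mul (cont_G p y)).intervalIntegrable _ _)
          (((cont_G p x).mul (cont_G p z)).intervalIntegrable _ _)]
        congr 1; ext ξ; rw [Gf_add]; ring
      have h2 : (∫ ξ in (0:ℝ)..(1/2), Hf p x ξ * Hf p (y + z) ξ)
          = (∫ ξ in (0:ℝ)..(1/2), Hf p x ξ * Hf p y ξ) +
            (∫ ξ in (0:ℝ)..(1/2), Hf p x ξ * Hf p z ξ) := by
        rw [← intervalIntegral.integral_add (f := fun ξ => Hf p x ξ * Hf p y ξ)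
          (g := fun ξ => Hf p x ξ * Hf p z ξ) (((cont_H p x).mul (cont_H p y)).intervalIntegrable _ _)
          (((cont_H p x).mul (cont_H p z)).intervalIntegrable _ _)]
        congr 1; ext ξ; rw [Hf_add]; ring
      rw [h1, h2]; ring)
    (by
      intro a x y
      have h1 : (∫ ξ in (-(1:ℝ)/2)..0, Gf p x ξ * Gf p (a • y) ξ)
          = a * ∫ ξ in (-(1:ℝ)/2)..0, Gf p x ξ * Gf p y ξ := by
        rw [← intervalIntegral.integral_const_mul]
        congr 1; ext ξ; rw [Gf_smul]; ring
      have h2 : (∫ ξ in (0:ℝ)..(1/2), Hf p x ξ * Hf p (a • y) ξ)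
          = a * ∫ ξ in (0:ℝ)..(1/2), Hf p x ξ * Hf p y ξ := by
        rw [← intervalIntegral.integral_const_mul]
        congr 1; ext ξ; rw [Hf_smul]; ring
      rw [h1, h2]; simp [smul_eq_mul]; ring)

lemma Bfull_apply (x y : V p × V p) :
    Bfull p x y = (∫ ξ in (-(1:ℝ)/2)..0, Gf p x ξ * Gf p y ξ) +
      (∫ ξ in (0:ℝ)..(1/2), Hf p x ξ * Hf p y ξ) := rfl

lemma Bfull_symm (x y : V p × V p) : Bfull p x y = Bfull p y x := by
  rw [Bfull_apply, Bfull_apply]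
  congr 1 <;> · congr 1; ext ξ; ring

lemma Bfull_self_nonneg (x : V p × V p) : 0 ≤ Bfull p x x := by
  rw [Bfull_apply]
  have h1 : 0 ≤ ∫ ξ in (-(1:ℝ)/2)..0, Gf p x ξ * Gf p x ξ :=
    intervalIntegral.integral_nonneg (by norm_num) fun u _ => mul_self_nonneg _
  have h2 : 0 ≤ ∫ ξ in (0:ℝ)..(1/2), Hf p x ξ * Hf p x ξ :=
    intervalIntegral.integral_nonneg (by norm_num) fun u _ => mul_self_nonneg _
  linarith

/-- standard basis vector -/
noncomputable def ev (j : Fin (p+1)) : V p := Pi.single j 1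

lemma sum_single (c : V p) : ∑ j, c j • ev p j = c := by
  funext k
  simp only [Finset.sum_apply, Pi.smul_apply, ev, smul_eq_mul]
  simp [Pi.single_apply]

lemma decomp_left (c : V p) : ((c, (0 : V p)) : V p × V p) = ∑ j, c j • ((ev p j, 0) : V p × V p) := by
  have h1 : (∑ j, c j • ((ev p j, 0) : V p × V p)).1 = ∑ j, c j • ev p j := by
    rw [Prod.fst_sum]; simp
  have h2 : (∑ j, c j • ((ev p j, 0) : V p × V p)).2 = (0 : V p) := by
    rw [Prod.snd_sum]; simp
  refine Prod.ext ?_ ?_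
  · rw [h1, sum_single]
  · rw [h2]

lemma decomp_right (d : V p) : (((0 : V p), d) : V p × V p) = ∑ j, d j • (((0 : V p), ev p j) : V p × V p) := by
  have h1 : (∑ j, d j • (((0 : V p), ev p j) : V p × V p)).1 = (0 : V p) := by
    rw [Prod.fst_sum]; simp
  have h2 : (∑ j, d j • (((0 : V p), ev p j) : V p × V p)).2 = ∑ j, d j • ev p j := by
    rw [Prod.snd_sum]; simp
  refine Prod.ext ?_ ?_
  · rw [h1]
  · rw [h2, sum_single]

lemma Bfull_left_expand (c : V p) (y : V p × V p) :
    Bfull p (c, 0) y = ∑ j, c j * Bfull p (ev p j, 0) y := by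
  rw [decomp_left p c, map_sum]
  rw [LinearMap.sum_apply]
  exact Finset.sum_congr rfl fun j _ => by rw [_root_.map_smul]; rfl

lemma Bfull_right_expand (x : V p × V p) (c : V p) :
    Bfull p x (c, 0) = ∑ j, c j * Bfull p x (ev p j, 0) := by
  conv_lhs => rw [decomp_left p c]
  rw [map_sum]
  exact Finset.sum_congr rfl fun j _ => by rw [_root_.map_smul]; rfl

noncomputable def M : Matrix (Fin (p+1)) (Fin (p+1)) ℝ :=
  fun j k => Bfull p (ev p j, 0) (ev p k, 0)

/-- the polynomial with coefficient vector `c`. -/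
noncomputable def vpoly (c : V p) : Polynomial ℝ := ∑ i : Fin (p+1), C (c i) * X ^ (i : ℕ)

lemma vpoly_natDegree_le (c : V p) : (vpoly p c).natDegree ≤ p := by
  apply Polynomial.natDegree_sum_le_of_forall_le
  intro i _
  calc (C (c i) * X ^ (i:ℕ)).natDegree ≤ (X ^ (i:ℕ) : Polynomial ℝ).natDegree :=
        natDegree_C_mul_le _ _
    _ ≤ p := by rw [natDegree_X_pow]; omega

lemma vpoly_eval (c : V p) (ξ : ℝ) : (vpoly p c).eval ξ = pev p c ξ := by
  simp [vpoly, pev, eval_finset_sum]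

lemma vpoly_coeff (c : V p) (i : Fin (p+1)) : (vpoly p c).coeff i = c i := by
  simp only [vpoly, finset_sum_coeff, coeff_C_mul, coeff_X_pow]
  rw [Finset.sum_eq_single i]
  · simp
  · intro b _ hb
    have : (b : ℕ) ≠ (i : ℕ) := fun h => hb (Fin.ext h)
    simp [this, Ne.symm this]
  · simp

/-- integral of a square of a polynomial vanishing forces the polynomial to vanish. -/
lemma poly_eq_zero_of_int (q : Polynomial ℝ) {a b : ℝ} (hab : a < b)
    (h : (∫ ξ in a..b, (q.eval ξ)^2) = 0) : q = 0 := by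
  by_contra hq
  have hfin : {x : ℝ | q.IsRoot x}.Finite := Polynomial.finite_setOf_isRoot hq
  rw [intervalIntegral.integral_of_le hab.le] at h
  have hint : IntegrableOn (fun ξ => (q.eval ξ)^2) (Set.Ioc a b) :=
    (q.continuous.pow 2).integrableOn_Ioc
  have hae : (fun ξ => (q.eval ξ)^2) =ᶠ[ae (volume.restrict (Set.Ioc a b))] 0 := by
    rw [← MeasureTheory.integral_eq_zero_iff_of_nonneg (fun x => sq_nonneg _) hint]
    exact h
  have hroot : ∀ᵐ x ∂(volume.restrict (Set.Ioc a b)), q.IsRoot x := by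
    filter_upwards [hae] with x hx
    have : (q.eval x)^2 = 0 := hx
    exact (pow_eq_zero_iff two_ne_zero).mp this
  have hnull : volume ({x : ℝ | q.IsRoot x}ᶜ ∩ Set.Ioc a b) = 0 := by
    have := hroot
    rw [MeasureTheory.ae_iff, Measure.restrict_apply' measurableSet_Ioc] at this
    exact this
  have hIoc : volume (Set.Ioc a b) ≤ volume {x : ℝ | q.IsRoot x} +
      volume ({x : ℝ | q.IsRoot x}ᶜ ∩ Set.Ioc a b) := by
    refine le_trans (measure_mono ?_) (measure_union_le _ _)
    intro x hx
    by_cases hr : q.IsRoot x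
    · exact Or.inl hr
    · exact Or.inr ⟨hr, hx⟩
  rw [hfin.measure_zero, hnull] at hIoc
  simp only [add_zero, nonpos_iff_eq_zero] at hIoc
  rw [Real.volume_Ioc] at hIoc
  rw [ENNReal.ofReal_eq_zero] at hIoc
  linarith

lemma fd_eq_pev (d : V p) (ξ : ℝ) :
    fd p d ξ = pev p (fun k => d k / (2 * Nat.factorial k)) ξ := by
  rw [fd, pev, Finset.mul_sum]
  refine Finset.sum_congr rfl fun i _ => ?_
  field_simp
  try ring

/-- `Fpoly d` is the polynomial whose evaluation is `fd p d`. -/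
noncomputable def Fpoly (d : V p) : Polynomial ℝ :=
  vpoly p (fun k => d k / (2 * Nat.factorial k))

lemma Fpoly_eval (d : V p) (ξ : ℝ) : (Fpoly p d).eval ξ = fd p d ξ := by
  rw [Fpoly, vpoly_eval, fd_eq_pev]

lemma Fpoly_eq_zero_iff (d : V p) : Fpoly p d = 0 ↔ d = 0 := by
  constructor
  · intro h
    funext k
    have := vpoly_coeff p (fun k => d k / (2 * Nat.factorial k)) k
    rw [← Fpoly, h] at this
    simp only [coeff_zero] at this
    have h2 : (2 * (Nat.factorial k : ℝ)) ≠ 0 := by positivity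
    have := (div_eq_zero_iff.mp this.symm).resolve_right h2
    simpa using this
  · intro h; subst h
    rw [Fpoly]
    unfold vpoly
    simp

/-- key positivity: the diagonal of `Bfull` vanishes only when both polynomials vanish. -/
lemma Bfull_self_eq_zero (c d : V p) (h : Bfull p (c, d) (c, d) = 0) :
    vpoly p c + Fpoly p d = 0 ∧ vpoly p c - Fpoly p d = 0 := by
  rw [Bfull_apply] at h
  have h1 : 0 ≤ ∫ ξ in (-(1:ℝ)/2)..0, Gf p (c, d) ξ * Gf p (c, d) ξ :=
    intervalIntegral.integral_nonneg (by norm_num) fun u _ => mul_self_nonneg _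
  have h2 : 0 ≤ ∫ ξ in (0:ℝ)..(1/2), Hf p (c, d) ξ * Hf p (c, d) ξ :=
    intervalIntegral.integral_nonneg (by norm_num) fun u _ => mul_self_nonneg _
  have hz1 : (∫ ξ in (-(1:ℝ)/2)..0, Gf p (c, d) ξ * Gf p (c, d) ξ) = 0 := by linarith
  have hz2 : (∫ ξ in (0:ℝ)..(1/2), Hf p (c, d) ξ * Hf p (c, d) ξ) = 0 := by linarith
  constructor
  · apply poly_eq_zero_of_int (vpoly p c + Fpoly p d) (a := -(1:ℝ)/2) (b := 0) (by norm_num)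
    rw [← hz1]
    congr 1; ext ξ
    simp only [eval_add, vpoly_eval, Fpoly_eval, Gf]
    ring
  · apply poly_eq_zero_of_int (vpoly p c - Fpoly p d) (a := (0:ℝ)) (b := 1/2) (by norm_num)
    rw [← hz2]
    congr 1; ext ξ
    simp only [eval_sub, vpoly_eval, Fpoly_eval, Hf]
    ring

lemma M_dot (c c' : V p) : c ⬝ᵥ (M p) *ᵥ c' = Bfull p (c, 0) (c', 0) := by
  have h : c ⬝ᵥ (M p) *ᵥ c' = ∑ j, ∑ k, c j * (M p j k * c' k) := by
    simp [dotProduct, Matrix.mulVec, Finset.mul_sum]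
  rw [h, Bfull_left_expand]
  refine Finset.sum_congr rfl fun j _ => ?_
  rw [Bfull_right_expand p _ c', Finset.mul_sum]
  refine Finset.sum_congr rfl fun k _ => ?_
  simp only [M]
  ring

lemma M_posdef : (M p).PosDef := by
  rw [Matrix.posDef_iff_dotProduct_mulVec]
  constructor
  · ext j k
    simp [Matrix.conjTranspose_apply, M, Bfull_symm]
  · intro x hx
    have hdot : star x ⬝ᵥ (M p) *ᵥ x = Bfull p (x, 0) (x, 0) := by
      rw [star_trivial]; exact M_dot p x x
    rw [hdot]
    rcases lt_or_eq_of_le (Bfull_self_nonneg p (x, 0)) with h | h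
    · exact h
    · exfalso
      obtain ⟨h1, h2⟩ := Bfull_self_eq_zero p x 0 h.symm
      rw [(Fpoly_eq_zero_iff p 0).mpr rfl, add_zero] at h1
      apply hx
      funext j
      have := vpoly_coeff p x j
      rw [h1] at this
      simpa using this.symm

lemma M_mulVec_inv (v : V p) : (M p) *ᵥ ((M p)⁻¹ *ᵥ v) = v := by
  have hdet : IsUnit (M p).det := isUnit_iff_ne_zero.mpr (M_posdef p).det_pos.ne'
  rw [Matrix.mulVec_mulVec, Matrix.mul_nonsing_inv _ hdet, Matrix.one_mulVec]

noncomputable def wvL : V p →ₗ[ℝ] V p where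
  toFun d := fun j => Bfull p (ev p j, 0) (0, d)
  map_add' d d' := by
    funext j
    have h : (((0 : V p), d + d') : V p × V p) = ((0 : V p), d) + ((0 : V p), d') := by
      refine Prod.ext ?_ ?_ <;> simp
    simp only [h, map_add]
    rfl
  map_smul' a d := by
    funext j
    have h : (((0 : V p), a • d) : V p × V p) = a • (((0 : V p), d) : V p × V p) := by
      refine Prod.ext ?_ ?_ <;> simp
    simp only [h, _root_.map_smul]
    rfl

noncomputable def cstar (d : V p) : V p := -((M p)⁻¹ *ᵥ wvL p d)

noncomputable def iota : V p →ₗ[ℝ] (V p × V p) where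
  toFun d := (cstar p d, d)
  map_add' d d' := by
    refine Prod.ext ?_ ?_
    · show cstar p (d + d') = cstar p d + cstar p d'
      simp only [cstar, map_add, Matrix.mulVec_add]
      abel
    · rfl
  map_smul' a d := by
    refine Prod.ext ?_ ?_
    · show cstar p (a • d) = a • cstar p d
      simp [cstar, Matrix.mulVec_smul]
    · rfl

lemma iota_apply (d : V p) : iota p d = (cstar p d, d) := rfl

lemma orth (d : V p) (j : Fin (p+1)) : Bfull p (ev p j, 0) (cstar p d, d) = 0 := by
  have hsplit : ((cstar p d, d) : V p × V p) = (cstar p d, 0) + (0, d) := by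
    refine Prod.ext ?_ ?_ <;> simp
  rw [hsplit, map_add]
  have h1 : Bfull p (ev p j, 0) (cstar p d, 0) = ((M p) *ᵥ cstar p d) j := by
    rw [Bfull_right_expand]
    simp only [Matrix.mulVec, dotProduct, M]
    exact Finset.sum_congr rfl fun k _ => by ring
  rw [h1]
  have h2 : (M p) *ᵥ cstar p d = -(wvL p d) := by
    rw [cstar, Matrix.mulVec_neg, M_mulVec_inv]
  rw [h2]
  show -(wvL p d) j + Bfull p (ev p j, 0) (0, d) = 0
  have : wvL p d j = Bfull p (ev p j, 0) (0, d) := rfl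
  simp [this]

lemma orth' (d : V p) (c : V p) : Bfull p (c, 0) (cstar p d, d) = 0 := by
  rw [Bfull_left_expand]
  simp [orth]

lemma key_min (c d : V p) :
    Bfull p (c, d) (c, d)
      = Bfull p (cstar p d, d) (cstar p d, d)
        + Bfull p (c - cstar p d, 0) (c - cstar p d, 0) := by
  have hdecomp : ((c, d) : V p × V p) = (cstar p d, d) + (c - cstar p d, 0) := by
    refine Prod.ext ?_ ?_ <;> simp
  rw [hdecomp]
  simp only [map_add, LinearMap.add_apply]
  have e1 : Bfull p (cstar p d, d) (c - cstar p d, 0) = 0 := by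
    rw [Bfull_symm]; exact orth' p d _
  have e2 : Bfull p (c - cstar p d, 0) (cstar p d, d) = 0 := orth' p d _
  rw [e1, e2]
  ring

lemma isLeast_min (d : V p) :
    IsLeast {q : ℝ | ∃ c : V p, q = Bfull p (c, d) (c, d)}
      (Bfull p (cstar p d, d) (cstar p d, d)) := by
  constructor
  · exact ⟨cstar p d, rfl⟩
  · rintro q ⟨c, rfl⟩
    have h := Bfull_self_nonneg p (c - cstar p d, 0)
    rw [key_min p c d]
    linarith

lemma set_eq (d : V p) :
    {q : ℝ | ∃ v : Polynomial ℝ, v.natDegree ≤ p ∧ q = Qerr p d v}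
      = {q : ℝ | ∃ c : V p, q = Bfull p (c, d) (c, d)} := by
  ext q
  constructor
  · rintro ⟨v, hv, rfl⟩
    refine ⟨fun i => v.coeff i, ?_⟩
    have hev : ∀ ξ : ℝ, v.eval ξ = pev p (fun i : Fin (p+1) => v.coeff i) ξ := by
      intro ξ
      rw [Polynomial.eval_eq_sum_range' (Nat.lt_succ_of_le hv), pev,
        Fin.sum_univ_eq_sum_range (fun i => v.coeff i * ξ ^ i)]
    rw [Qerr, Bfull_apply]
    congr 1
    · refine intervalIntegral.integral_congr fun ξ _ => ?_
      simp only [Gf, ← hev, sq]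
    · refine intervalIntegral.integral_congr fun ξ _ => ?_
      simp only [Hf, ← hev, sq]
  · rintro ⟨c, rfl⟩
    refine ⟨vpoly p c, vpoly_natDegree_le p c, ?_⟩
    rw [Qerr, Bfull_apply]
    congr 1
    · refine intervalIntegral.integral_congr fun ξ _ => ?_
      simp only [Gf, vpoly_eval, sq]
    · refine intervalIntegral.integral_congr fun ξ _ => ?_
      simp only [Hf, vpoly_eval, sq]

noncomputable def Amat : Matrix (Fin (p+1)) (Fin (p+1)) ℝ :=
  fun j k => Bfull p (iota p (ev p j)) (iota p (ev p k))

lemma iota_expand (d : V p) : iota p d = ∑ j, d j • iota p (ev p j) := by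
  conv_lhs => rw [← sum_single p d]
  rw [map_sum]
  exact Finset.sum_congr rfl fun j _ => by rw [_root_.map_smul]

lemma Q_expand (d : V p) :
    Bfull p (iota p d) (iota p d) = ∑ j, ∑ k, Amat p j k * d j * d k := by
  conv_lhs => rw [iota_expand p d]
  simp only [map_sum, LinearMap.sum_apply, _root_.map_smul, LinearMap.smul_apply, smul_eq_mul,
    Finset.mul_sum]
  rw [Finset.sum_comm]
  refine Finset.sum_congr rfl fun j _ => Finset.sum_congr rfl fun k _ => ?_
  simp only [Amat]
  ring

lemma Qform_eq (d : V p) : Qform p d = Bfull p (iota p d) (iota p d) := by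
  rw [Qform, set_eq p d, (isLeast_min p d).csInf_eq, iota_apply]

lemma dot_eq {n : ℕ} (A : Matrix (Fin n) (Fin n) ℝ) (x : Fin n → ℝ) :
    x ⬝ᵥ A *ᵥ x = ∑ j, ∑ k, A j k * x j * x k := by
  simp only [dotProduct, Matrix.mulVec, Finset.mul_sum]
  exact Finset.sum_congr rfl fun j _ => Finset.sum_congr rfl fun k _ => by ring

end QAux

theorem Qform_is_posdef_quadratic_form (p : ℕ) :
    ∃ A : Matrix (Fin (p+1)) (Fin (p+1)) ℝ,
      A.IsSymm ∧ A.PosDef ∧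
      ∀ d : Fin (p+1) → ℝ,
        Qform p d = ∑ j : Fin (p+1), ∑ k : Fin (p+1), A j k * d j * d k := by
  classical
  refine ⟨QAux.Amat p, ?_, ?_, ?_⟩
  · exact Matrix.IsSymm.ext fun j k => QAux.Bfull_symm p _ _
  · rw [Matrix.posDef_iff_dotProduct_mulVec]
    constructor
    · ext j k
      simp only [Matrix.conjTranspose_apply, star_trivial]
      exact QAux.Bfull_symm p _ _
    · intro x hx
      have hd : star x ⬝ᵥ (QAux.Amat p) *ᵥ x
          = QAux.Bfull p (QAux.iota p x) (QAux.iota p x) := by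
        rw [star_trivial, QAux.dot_eq, QAux.Q_expand]
      rw [hd]
      rcases lt_or_eq_of_le (QAux.Bfull_self_nonneg p (QAux.iota p x)) with h | h
      · exact h
      · exfalso
        have h0 : QAux.Bfull p (QAux.cstar p x, x) (QAux.cstar p x, x) = 0 := by
          rw [← QAux.iota_apply, ← h]
        obtain ⟨h1, h2⟩ := QAux.Bfull_self_eq_zero p (QAux.cstar p x) x h0
        have hF : QAux.Fpoly p x = 0 := by
          have h3 := sub_eq_zero.mpr (h1.trans h2.symm)
          have h4 : (QAux.vpoly p (QAux.cstar p x) + QAux.Fpoly p x)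
              - (QAux.vpoly p (QAux.cstar p x) - QAux.Fpoly p x)
              = 2 * QAux.Fpoly p x := by ring
          rw [h4] at h3
          have h5 : (2 : Polynomial ℝ) ≠ 0 := by norm_num
          exact (mul_eq_zero.mp h3).resolve_left h5
        exact hx ((QAux.Fpoly_eq_zero_iff p x).mp hF)
  · intro d
    rw [QAux.Qform_eq, QAux.Q_expand]
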